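/- Let F be a feasible R-special directed solution. Then for every dangerous ring-cut C there is exactly one directed link in F that is responsible for C. -/
import Mathlib


/-- `Reach F u v`: there is a directed path of links of `F` from `u` to `v`. -/
def Reach (F : Finset (ℕ × ℕ)) (u v : ℕ) : Prop :=
  Relation.ReflTransGen (fun a b => (a, b) ∈ F) u v

/-- A directed link `(u,v)` enters a cut `C` if `v ∈ C` and `u ∉ C`. -/
def Enters (f : ℕ × ℕ) (C : Set ℕ) : Prop := f.2 ∈ C ∧ f.1 ∉ C

/-- Two directed links cross if their intervals `[a,b]`, `[c,d]` satisfy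
`a < c < b < d` or `c < a < d < b`. -/
def Crosses (f g : ℕ × ℕ) : Prop :=
  (min f.1 f.2 < min g.1 g.2 ∧ min g.1 g.2 < max f.1 f.2 ∧ max f.1 f.2 < max g.1 g.2) ∨
    (min g.1 g.2 < min f.1 f.2 ∧ min f.1 f.2 < max g.1 g.2 ∧ max g.1 g.2 < max f.1 f.2)

/-- `F` is an `R`-special directed solution (with root `r = 0`):
(1) the endpoints of every link are distinct and lie in `R`;
(2) `(R, F)` is an `r`-out arborescence;
(3) no two links of `F` cross;
(4) no two links of `F` leaving the same vertex go in the same direction. -/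
def RSpecial (R : Finset ℕ) (F : Finset (ℕ × ℕ)) : Prop :=
  (∀ f ∈ F, f.1 ≠ f.2 ∧ f.1 ∈ R ∧ f.2 ∈ R) ∧
    (∀ f ∈ F, f.2 ≠ 0) ∧
    (∀ v ∈ R, v ≠ 0 → ∃! f : ℕ × ℕ, f ∈ F ∧ f.2 = v) ∧
    (∀ v ∈ R, Reach F 0 v) ∧
    (∀ f ∈ F, ∀ g ∈ F, f ≠ g → ¬Crosses f g) ∧
    (∀ f ∈ F, ∀ g ∈ F, f ≠ g → f.1 = g.1 →
      ¬((f.1 < f.2 ∧ g.1 < g.2) ∨ (f.2 < f.1 ∧ g.2 < g.1)))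

/-- A ring-cut is an interval `{a, …, b}` with `1 ≤ a ≤ b ≤ n-1`. -/
def IsRingCut (n : ℕ) (C : Set ℕ) : Prop :=
  ∃ a b : ℕ, 1 ≤ a ∧ a ≤ b ∧ b ≤ n - 1 ∧ C = Set.Icc a b

/-- `F` is feasible: every dangerous ring-cut is entered by some link of `F`. -/
def FeasibleDir (n : ℕ) (R : Finset ℕ) (F : Finset (ℕ × ℕ)) : Prop :=
  ∀ C : Set ℕ, IsRingCut n C → (C ∩ ↑R).Nonempty → ∃ f ∈ F, Enters f C

/-- A link `f = (u,v) ∈ F` is responsible for a cut `C` if it enters `C` and no link on the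
unique directed path in `(R,F)` from the root to `u` (i.e. no link of `F` whose head is an
ancestor of `u`) enters `C`. -/
def Responsible (F : Finset (ℕ × ℕ)) (f : ℕ × ℕ) (C : Set ℕ) : Prop :=
  f ∈ F ∧ Enters f C ∧ ∀ g ∈ F, Reach F g.2 f.1 → ¬Enters g C

/-- `[a, b]` is the `v`-bad interval `I_v`: the maximal interval of `V(H)` containing `v`
that contains no terminal which is not a descendant of `v`. -/
def IsBadInterval (n : ℕ) (R : Finset ℕ) (F : Finset (ℕ × ℕ)) (v a b : ℕ) : Prop :=
  a ≤ v ∧ v ≤ b ∧ b ≤ n - 1 ∧ (∀ w ∈ R, a ≤ w → w ≤ b → Reach F v w) ∧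
    ∀ a' b' : ℕ, a' ≤ a → b ≤ b' → b' ≤ n - 1 →
      (∀ w ∈ R, a' ≤ w → w ≤ b' → Reach F v w) → a' = a ∧ b' = b


/-! ### Auxiliary machinery -/

/-- `PathLen F k u v`: there is a directed walk of exactly `k` links of `F` from `u` to `v`. -/
def PathLen (F : Finset (ℕ × ℕ)) : ℕ → ℕ → ℕ → Prop
  | 0, u, v => u = v
  | k + 1, u, v => ∃ w, (u, w) ∈ F ∧ PathLen F k w v

lemma pathLen_zero {F : Finset (ℕ × ℕ)} {u v : ℕ} : PathLen F 0 u v ↔ u = v := Iff.rfl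

lemma pathLen_succ {F : Finset (ℕ × ℕ)} {k u v : ℕ} :
    PathLen F (k + 1) u v ↔ ∃ w, (u, w) ∈ F ∧ PathLen F k w v := Iff.rfl

lemma pathLen_single {F : Finset (ℕ × ℕ)} {u v : ℕ} (h : (u, v) ∈ F) : PathLen F 1 u v :=
  ⟨v, h, rfl⟩

lemma pathLen_comp {F : Finset (ℕ × ℕ)} :
    ∀ {k m u v w : ℕ}, PathLen F k u v → PathLen F m v w → PathLen F (k + m) u w
  | 0, m, u, v, w, h1, h2 => by
      have h : u = v := h1
      subst h; rw [Nat.zero_add]; exact h2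
  | k + 1, m, u, v, w, h1, h2 => by
      obtain ⟨x, hx, hp⟩ := pathLen_succ.mp h1
      have he : k + 1 + m = (k + m) + 1 := by omega
      rw [he]
      exact pathLen_succ.mpr ⟨x, hx, pathLen_comp hp h2⟩

lemma pathLen_reach {F : Finset (ℕ × ℕ)} :
    ∀ {k u v : ℕ}, PathLen F k u v → Reach F u v
  | 0, u, v, h => by
      have h' : u = v := h
      subst h'; exact Relation.ReflTransGen.refl
  | k + 1, u, v, h => by
      obtain ⟨w, hw, hp⟩ := pathLen_succ.mp h
      exact Relation.ReflTransGen.head hw (pathLen_reach hp)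

lemma reach_exists {F : Finset (ℕ × ℕ)} {u v : ℕ} (h : Reach F u v) :
    ∃ k, PathLen F k u v := by
  have h' : Relation.ReflTransGen (fun a b => (a, b) ∈ F) u v := h
  clear h
  induction h' with
  | refl => exact ⟨0, rfl⟩
  | tail _ hbc ih =>
    obtain ⟨k, hk⟩ := ih
    exact ⟨k + 1, pathLen_comp hk (pathLen_single hbc)⟩

lemma pathLen_tail {F : Finset (ℕ × ℕ)} :
    ∀ {k u v : ℕ}, PathLen F (k + 1) u v → ∃ w, PathLen F k u w ∧ (w, v) ∈ F
  | 0, u, v, h => by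
      obtain ⟨w, hw, hp⟩ := pathLen_succ.mp h
      have h' : w = v := hp
      subst h'
      exact ⟨u, rfl, hw⟩
  | k + 1, u, v, h => by
      obtain ⟨w, hw, hp⟩ := pathLen_succ.mp h
      obtain ⟨x, hx, he⟩ := pathLen_tail hp
      exact ⟨x, pathLen_succ.mpr ⟨w, hw, hx⟩, he⟩

/-- In an arborescence all walks from the root to a fixed vertex have the same length. -/
lemma dist_unique {R : Finset ℕ} {F : Finset (ℕ × ℕ)}
    (hne : ∀ f ∈ F, f.1 ≠ f.2 ∧ f.1 ∈ R ∧ f.2 ∈ R)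
    (hz : ∀ f ∈ F, f.2 ≠ 0)
    (huniq : ∀ v ∈ R, v ≠ 0 → ∃! f : ℕ × ℕ, f ∈ F ∧ f.2 = v) :
    ∀ {k1 k2 v : ℕ}, PathLen F k1 0 v → PathLen F k2 0 v → k1 = k2 := by
  intro k1
  induction k1 with
  | zero =>
    intro k2 v h1 h2
    have hv : (0 : ℕ) = v := h1
    subst hv
    cases k2 with
    | zero => rfl
    | succ k2 =>
      obtain ⟨w, _, he⟩ := pathLen_tail h2
      exact absurd rfl (hz (w, 0) he)
  | succ k1 ih =>
    intro k2 v h1 h2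
    obtain ⟨w1, hw1, he1⟩ := pathLen_tail h1
    cases k2 with
    | zero =>
      have hv : (0 : ℕ) = v := h2
      subst hv
      exact absurd rfl (hz (w1, 0) he1)
    | succ k2 =>
      obtain ⟨w2, hw2, he2⟩ := pathLen_tail h2
      have hvR : v ∈ R := (hne (w1, v) he1).2.2
      have hv0 : v ≠ 0 := hz (w1, v) he1
      obtain ⟨e, -, hu⟩ := huniq v hvR hv0
      have e1 : (w1, v) = e := hu (w1, v) ⟨he1, rfl⟩
      have e2 : (w2, v) = e := hu (w2, v) ⟨he2, rfl⟩
      have hww : w1 = w2 := congrArg Prod.fst (e1.trans e2.symm)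
      subst hww
      rw [ih hw1 hw2]

/-- Heads are unique: two links with the same head are equal. -/
lemma head_unique {R : Finset ℕ} {F : Finset (ℕ × ℕ)}
    (hne : ∀ f ∈ F, f.1 ≠ f.2 ∧ f.1 ∈ R ∧ f.2 ∈ R)
    (hz : ∀ f ∈ F, f.2 ≠ 0)
    (huniq : ∀ v ∈ R, v ≠ 0 → ∃! f : ℕ × ℕ, f ∈ F ∧ f.2 = v)
    {f g : ℕ × ℕ} (hf : f ∈ F) (hg : g ∈ F) (h : f.2 = g.2) : f = g := by
  obtain ⟨e, -, hu⟩ := huniq g.2 ((hne g hg).2.2) (hz g hg)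
  exact (hu f ⟨hf, h⟩).trans (hu g ⟨hg, rfl⟩).symm

/-- If a directed walk starts outside `S` and ends inside `S`, some link on it enters `S`. -/
lemma cross_lemma {F : Finset (ℕ × ℕ)} (S : Set ℕ) {x y : ℕ}
    (hr : Reach F x y) (hy : y ∈ S) (hx : x ∉ S) :
    ∃ e : ℕ × ℕ, e ∈ F ∧ e.1 ∉ S ∧ e.2 ∈ S ∧ Reach F x e.1 ∧ Reach F e.2 y := by
  have hr' : Relation.ReflTransGen (fun a b => (a, b) ∈ F) x y := hr
  clear hr
  revert hx
  induction hr' using Relation.ReflTransGen.head_induction_on with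
  | refl => intro hx; exact absurd hy hx
  | @head p c h' hrest ih =>
    intro hx
    by_cases hc : c ∈ S
    · exact ⟨(p, c), h', hx, hc, Relation.ReflTransGen.refl, hrest⟩
    · obtain ⟨e, heF, h1, h2, hra, hry⟩ := ih hc
      exact ⟨e, heF, h1, h2, Relation.ReflTransGen.head h' hra, hry⟩

/-- If `f` is responsible for `C` then no vertex on the tree path from the root to `f.1`
lies in `C`. -/
lemma resp_avoid {F : Finset (ℕ × ℕ)} {f : ℕ × ℕ} {C : Set ℕ}
    (hresp : Responsible F f C) (h0C : (0 : ℕ) ∉ C) {x : ℕ}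
    (h0x : Reach F 0 x) (hxf : Reach F x f.1) (hx : x ∈ C) : False := by
  obtain ⟨e, heF, h1, h2, -, hex⟩ := cross_lemma C h0x hx h0C
  exact hresp.2.2 e heF (hex.trans hxf) ⟨h2, h1⟩

section Uniqueness

variable {R : Finset ℕ} {F : Finset (ℕ × ℕ)}
variable (hne : ∀ f ∈ F, f.1 ≠ f.2 ∧ f.1 ∈ R ∧ f.2 ∈ R)
variable (hz : ∀ f ∈ F, f.2 ≠ 0)
variable (huniq : ∀ v ∈ R, v ≠ 0 → ∃! f : ℕ × ℕ, f ∈ F ∧ f.2 = v)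
variable (hreach : ∀ v ∈ R, Reach F 0 v)
variable (hcross : ∀ f ∈ F, ∀ g ∈ F, f ≠ g → ¬Crosses f g)
variable (hdir : ∀ f ∈ F, ∀ g ∈ F, f ≠ g → f.1 = g.1 →
    ¬((f.1 < f.2 ∧ g.1 < g.2) ∨ (f.2 < f.1 ∧ g.2 < g.1)))

include hne hz huniq hreach hcross hdir

/-- Two responsible links both entering the cut from the left are equal. -/
lemma left_left {a b : ℕ} (ha1 : 1 ≤ a)
    {f g : ℕ × ℕ} (hf : Responsible F f (Set.Icc a b)) (hg : Responsible F g (Set.Icc a b))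
    (hfa : f.1 < a) (hga : g.1 < a) (hlt : f.1 < g.1) : False := by
  have hfF := hf.1; have hgF := hg.1
  have hf2 : a ≤ f.2 ∧ f.2 ≤ b := Set.mem_Icc.mp hf.2.1.1
  have hg2 : a ≤ g.2 ∧ g.2 ≤ b := Set.mem_Icc.mp hg.2.1.1
  have hfg : f ≠ g := fun h => by rw [h] at hlt; omega
  have hq : g.2 < f.2 := by
    rcases lt_trichotomy f.2 g.2 with h | h | h
    · exact absurd (Or.inl ⟨by omega, by omega, by omega⟩ : Crosses f g)
        (hcross f hfF g hgF hfg)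
    · exact absurd (head_unique hne hz huniq hfF hgF h) hfg
    · exact h
  obtain ⟨e, heF, he1, he2, h0e1, he2g⟩ :=
    cross_lemma (Set.Ioo f.1 f.2) (hreach g.1 (hne g hgF).2.1)
      (show g.1 ∈ Set.Ioo f.1 f.2 by rw [Set.mem_Ioo]; omega)
      (show (0 : ℕ) ∉ Set.Ioo f.1 f.2 by rw [Set.mem_Ioo]; omega)
  rw [Set.mem_Ioo] at he2
  have he1' : ¬(f.1 < e.1 ∧ e.1 < f.2) := fun h => he1 (Set.mem_Ioo.mpr h)
  rcases lt_trichotomy e.1 f.1 with h1 | h1 | h1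
  · exact hcross e heF f hfF (fun h => by rw [h] at he2; omega)
      (Or.inl ⟨by omega, by omega, by omega⟩)
  · exact hdir f hfF e heF (fun h => by rw [h] at he2; omega) h1.symm
      (Or.inl ⟨by omega, by omega⟩)
  · rcases lt_trichotomy e.1 f.2 with h2 | h2 | h2
    · omega
    · have hrf : Reach F f.2 g.1 := Relation.ReflTransGen.head
        (show (f.2, e.2) ∈ F by rw [← h2]; exact heF) he2g
      exact hg.2.2 f hfF hrf hf.2.1
    · exact hcross f hfF e heF (fun h => by rw [h] at he2; omega)
        (Or.inl ⟨by omega, by omega, by omega⟩)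

/-- Two responsible links both entering the cut from the right are equal. -/
lemma right_right {a b : ℕ} (ha1 : 1 ≤ a)
    {f g : ℕ × ℕ} (hf : Responsible F f (Set.Icc a b)) (hg : Responsible F g (Set.Icc a b))
    (hfb : b < f.1) (hgb : b < g.1) (hlt : g.1 < f.1) : False := by
  have hfF := hf.1; have hgF := hg.1
  have hf2 : a ≤ f.2 ∧ f.2 ≤ b := Set.mem_Icc.mp hf.2.1.1
  have hg2 : a ≤ g.2 ∧ g.2 ≤ b := Set.mem_Icc.mp hg.2.1.1
  have hfg : f ≠ g := fun h => by rw [h] at hlt; omega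
  have hq : f.2 < g.2 := by
    rcases lt_trichotomy g.2 f.2 with h | h | h
    · exact absurd (Or.inr ⟨by omega, by omega, by omega⟩ : Crosses f g)
        (hcross f hfF g hgF hfg)
    · exact absurd (head_unique hne hz huniq hfF hgF h.symm) hfg
    · exact h
  obtain ⟨e, heF, he1, he2, h0e1, he2g⟩ :=
    cross_lemma (Set.Ioo f.2 f.1) (hreach g.1 (hne g hgF).2.1)
      (show g.1 ∈ Set.Ioo f.2 f.1 by rw [Set.mem_Ioo]; omega)
      (show (0 : ℕ) ∉ Set.Ioo f.2 f.1 by rw [Set.mem_Ioo]; omega)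
  rw [Set.mem_Ioo] at he2
  have he1' : ¬(f.2 < e.1 ∧ e.1 < f.1) := fun h => he1 (Set.mem_Ioo.mpr h)
  rcases lt_trichotomy e.1 f.2 with h1 | h1 | h1
  · exact hcross e heF f hfF (fun h => by rw [h] at he2; omega)
      (Or.inl ⟨by omega, by omega, by omega⟩)
  · have hrf : Reach F f.2 g.1 := Relation.ReflTransGen.head
      (show (f.2, e.2) ∈ F by rw [← h1]; exact heF) he2g
    exact hg.2.2 f hfF hrf hf.2.1
  · rcases lt_trichotomy e.1 f.1 with h2 | h2 | h2
    · omega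
    · exact hdir f hfF e heF (fun h => by rw [h] at he2; omega) h2.symm
        (Or.inr ⟨by omega, by omega⟩)
    · exact hcross f hfF e heF (fun h => by rw [h] at he2; omega)
        (Or.inl ⟨by omega, by omega, by omega⟩)

/-- Two responsible links entering the cut from opposite sides: impossible. -/
lemma mixed {a b : ℕ} (ha1 : 1 ≤ a)
    {f g : ℕ × ℕ} (hf : Responsible F f (Set.Icc a b)) (hg : Responsible F g (Set.Icc a b))
    (hfa : f.1 < a) (hgb : b < g.1) : False := by
  have hfF := hf.1; have hgF := hg.1
  have hf2 : a ≤ f.2 ∧ f.2 ≤ b := Set.mem_Icc.mp hf.2.1.1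
  have hg2 : a ≤ g.2 ∧ g.2 ≤ b := Set.mem_Icc.mp hg.2.1.1
  have h0C : (0 : ℕ) ∉ Set.Icc a b := by rw [Set.mem_Icc]; omega
  have hreach0f1 : Reach F 0 f.1 := hreach f.1 (hne f hfF).2.1
  have hreach0g1 : Reach F 0 g.1 := hreach g.1 (hne g hgF).2.1
  have MIX : ∀ k w kp kp', Reach F 0 w → w ∉ Set.Icc a b → (w ≤ f.1 ∨ g.1 ≤ w) →
      PathLen F kp w f.1 → PathLen F kp' w g.1 → kp + kp' ≤ k → False := by
    intro k
    induction k using Nat.strong_induction_on with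
    | _ k IH =>
    intro w kp kp' h0w hwC hside hkp hkp' hsum
    have hwC' : ¬(a ≤ w ∧ w ≤ b) := fun h => hwC (Set.mem_Icc.mpr h)
    rcases hside with hwl | hwr
    · -- w is on the left of the cut
      obtain ⟨e, heF, he1, he2, hwe1, he2g1⟩ :=
        cross_lemma (Set.Ioi b) (pathLen_reach hkp') (Set.mem_Ioi.mpr hgb)
          (show w ∉ Set.Ioi b by rw [Set.mem_Ioi]; omega)
      rw [Set.mem_Ioi] at he2
      have he1b : e.1 ≤ b := by
        by_contra h; exact he1 (Set.mem_Ioi.mpr (by omega))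
      have he1C : e.1 ∉ Set.Icc a b := fun hmem => resp_avoid hg h0C (h0w.trans hwe1)
        (Relation.ReflTransGen.head heF he2g1) hmem
      have he1a : e.1 < a := by
        by_contra h
        exact he1C (Set.mem_Icc.mpr ⟨by omega, he1b⟩)
      have hef1 : e.1 < f.1 := by
        rcases lt_trichotomy e.1 f.1 with h | h | h
        · exact h
        · exact absurd (Or.inl ⟨by omega, by omega⟩)
            (hdir f hfF e heF (fun hh => by rw [hh] at hf2; omega) h.symm)
        · exact absurd (Or.inl ⟨by omega, by omega, by omega⟩)
            (hcross f hfF e heF (fun hh => by rw [hh] at hf2; omega))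
      have hge2 : g.1 ≤ e.2 := by
        by_contra h
        exact hcross e heF g hgF (fun hh => by rw [hh] at he1a; omega)
          (Or.inl ⟨by omega, by omega, by omega⟩)
      -- the path from the root to f.1 must pass through e.2
      have hre2f1 : Reach F e.2 f.1 := by
        obtain ⟨e', he'F, he'1, he'2, h0e'1, he'2f⟩ :=
          cross_lemma (Set.Ioo e.1 e.2) hreach0f1
            (show f.1 ∈ Set.Ioo e.1 e.2 by rw [Set.mem_Ioo]; omega)
            (show (0 : ℕ) ∉ Set.Ioo e.1 e.2 by rw [Set.mem_Ioo]; omega)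
        rw [Set.mem_Ioo] at he'2
        have he'1' : ¬(e.1 < e'.1 ∧ e'.1 < e.2) := fun h => he'1 (Set.mem_Ioo.mpr h)
        rcases lt_trichotomy e'.1 e.1 with h | h | h
        · exact absurd (Or.inl ⟨by omega, by omega, by omega⟩)
            (hcross e' he'F e heF (fun hh => by rw [hh] at he'2; omega))
        · exact absurd (Or.inl ⟨by omega, by omega⟩)
            (hdir e heF e' he'F (fun hh => by rw [hh] at he'2; omega) h.symm)
        · rcases lt_trichotomy e'.1 e.2 with h2 | h2 | h2
          · omega
          · exact Relation.ReflTransGen.head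
              (show (e.2, e'.2) ∈ F by rw [← h2]; exact he'F) he'2f
          · exact absurd (Or.inl ⟨by omega, by omega, by omega⟩)
              (hcross e heF e' he'F (fun hh => by rw [hh] at he'2; omega))
      -- the first link of the path from e.2 to f.1
      obtain ⟨j, hjF, hj1, hj2, hre2j1, hj2f⟩ :=
        cross_lemma (Set.Ioo e.1 e.2) hre2f1
          (show f.1 ∈ Set.Ioo e.1 e.2 by rw [Set.mem_Ioo]; omega)
          (show e.2 ∉ Set.Ioo e.1 e.2 by rw [Set.mem_Ioo]; omega)
      rw [Set.mem_Ioo] at hj2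
      have hj1' : ¬(e.1 < j.1 ∧ j.1 < e.2) := fun h => hj1 (Set.mem_Ioo.mpr h)
      have hj1e2 : j.1 = e.2 := by
        rcases lt_trichotomy j.1 e.1 with h | h | h
        · exact absurd (Or.inl ⟨by omega, by omega, by omega⟩)
            (hcross j hjF e heF (fun hh => by rw [hh] at hj2; omega))
        · exact absurd (Or.inl ⟨by omega, by omega⟩)
            (hdir e heF j hjF (fun hh => by rw [hh] at hj2; omega) h.symm)
        · rcases lt_trichotomy j.1 e.2 with h2 | h2 | h2
          · omega
          · exact h2
          · exact absurd (Or.inl ⟨by omega, by omega, by omega⟩)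
              (hcross e heF j hjF (fun hh => by rw [hh] at hj2; omega))
      have hjedge : (e.2, j.2) ∈ F := by rw [← hj1e2]; exact hjF
      have h0j2 : Reach F 0 j.2 := ((h0w.trans hwe1).tail heF).tail hjedge
      have hj2C : j.2 ∉ Set.Icc a b := fun hmem => resp_avoid hf h0C h0j2 hj2f hmem
      have hj2C' : ¬(a ≤ j.2 ∧ j.2 ≤ b) := fun h => hj2C (Set.mem_Icc.mpr h)
      rcases eq_or_lt_of_le hge2 with hcorner | hp'lt
      · -- g.1 = e.2 : both g and j leave e.2 leftwards
        exact hdir g hgF j hjF (fun hh => by rw [hh] at hg2; omega)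
          (by omega) (Or.inr ⟨by omega, by omega⟩)
      · obtain ⟨j', hj'F, hj'1, hj'2, hre2j'1, hj'2g⟩ :=
          cross_lemma (Set.Ioo e.1 e.2) he2g1
            (show g.1 ∈ Set.Ioo e.1 e.2 by rw [Set.mem_Ioo]; omega)
            (show e.2 ∉ Set.Ioo e.1 e.2 by rw [Set.mem_Ioo]; omega)
        rw [Set.mem_Ioo] at hj'2
        have hj'1' : ¬(e.1 < j'.1 ∧ j'.1 < e.2) := fun h => hj'1 (Set.mem_Ioo.mpr h)
        have hj'1e2 : j'.1 = e.2 := by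
          rcases lt_trichotomy j'.1 e.1 with h | h | h
          · exact absurd (Or.inl ⟨by omega, by omega, by omega⟩)
              (hcross j' hj'F e heF (fun hh => by rw [hh] at hj'2; omega))
          · exact absurd (Or.inl ⟨by omega, by omega⟩)
              (hdir e heF j' hj'F (fun hh => by rw [hh] at hj'2; omega) h.symm)
          · rcases lt_trichotomy j'.1 e.2 with h2 | h2 | h2
            · omega
            · exact h2
            · exact absurd (Or.inl ⟨by omega, by omega, by omega⟩)
                (hcross e heF j' hj'F (fun hh => by rw [hh] at hj'2; omega))
        have hjj : j' = j := by
          by_contra hne'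
          exact hdir j' hj'F j hjF hne' (hj'1e2.trans hj1e2.symm)
            (Or.inr ⟨by omega, by omega⟩)
        have hj2g : Reach F j.2 g.1 := hjj ▸ hj'2g
        have hnotf : ¬(f.1 < j.2 ∧ j.2 < f.2) := fun h =>
          hcross f hfF j hjF (fun hh => by rw [hh] at hfa; omega)
            (Or.inl ⟨by omega, by omega, by omega⟩)
        have hnotg : ¬(g.2 < j.2 ∧ j.2 < g.1) := fun h =>
          hcross g hgF j hjF (fun hh => by rw [hh] at hg2; omega)
            (Or.inl ⟨by omega, by omega, by omega⟩)
        have hside' : j.2 ≤ f.1 ∨ g.1 ≤ j.2 := by omega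
        obtain ⟨u, hu⟩ := reach_exists hwe1
        obtain ⟨s, hs⟩ := reach_exists h0w
        obtain ⟨mp, hmp⟩ := reach_exists hj2f
        obtain ⟨mp', hmp'⟩ := reach_exists hj2g
        have hwj : PathLen F (u + 1 + 1) w j.2 :=
          pathLen_comp (pathLen_comp hu (pathLen_single (show (e.1, e.2) ∈ F from heF)))
            (pathLen_single hjedge)
        have heq1 : s + kp = s + (u + 1 + 1) + mp :=
          dist_unique hne hz huniq (pathLen_comp hs hkp)
            (pathLen_comp (pathLen_comp hs hwj) hmp)
        have heq2 : s + kp' = s + (u + 1 + 1) + mp' :=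
          dist_unique hne hz huniq (pathLen_comp hs hkp')
            (pathLen_comp (pathLen_comp hs hwj) hmp')
        exact IH (mp + mp') (by omega) j.2 mp mp' h0j2 hj2C hside' hmp hmp' le_rfl
    · -- w is on the right of the cut
      obtain ⟨e, heF, he1, he2, hwe1, he2f1⟩ :=
        cross_lemma (Set.Iio a) (pathLen_reach hkp) (Set.mem_Iio.mpr hfa)
          (show w ∉ Set.Iio a by rw [Set.mem_Iio]; omega)
      rw [Set.mem_Iio] at he2
      have he1b : a ≤ e.1 := by
        by_contra h; exact he1 (Set.mem_Iio.mpr (by omega))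
      have he1C : e.1 ∉ Set.Icc a b := fun hmem => resp_avoid hf h0C (h0w.trans hwe1)
        (Relation.ReflTransGen.head heF he2f1) hmem
      have he1a : b < e.1 := by
        by_contra h
        exact he1C (Set.mem_Icc.mpr ⟨he1b, by omega⟩)
      have heg1 : g.1 < e.1 := by
        rcases lt_trichotomy g.1 e.1 with h | h | h
        · exact h
        · exact absurd (Or.inr ⟨by omega, by omega⟩)
            (hdir g hgF e heF (fun hh => by rw [hh] at hg2; omega) h)
        · exact absurd (Or.inl ⟨by omega, by omega, by omega⟩)
            (hcross e heF g hgF (fun hh => by rw [hh] at he2; omega))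
      have hef2 : e.2 ≤ f.1 := by
        by_contra h
        exact hcross f hfF e heF (fun hh => by rw [hh] at hfa; omega)
          (Or.inl ⟨by omega, by omega, by omega⟩)
      have hre2g1 : Reach F e.2 g.1 := by
        obtain ⟨e', he'F, he'1, he'2, h0e'1, he'2g⟩ :=
          cross_lemma (Set.Ioo e.2 e.1) hreach0g1
            (show g.1 ∈ Set.Ioo e.2 e.1 by rw [Set.mem_Ioo]; omega)
            (show (0 : ℕ) ∉ Set.Ioo e.2 e.1 by rw [Set.mem_Ioo]; omega)
        rw [Set.mem_Ioo] at he'2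
        have he'1' : ¬(e.2 < e'.1 ∧ e'.1 < e.1) := fun h => he'1 (Set.mem_Ioo.mpr h)
        rcases lt_trichotomy e'.1 e.2 with h | h | h
        · exact absurd (Or.inl ⟨by omega, by omega, by omega⟩)
            (hcross e' he'F e heF (fun hh => by rw [hh] at he'2; omega))
        · exact Relation.ReflTransGen.head
            (show (e.2, e'.2) ∈ F by rw [← h]; exact he'F) he'2g
        · rcases lt_trichotomy e'.1 e.1 with h2 | h2 | h2
          · omega
          · exact absurd (Or.inr ⟨by omega, by omega⟩)
              (hdir e heF e' he'F (fun hh => by rw [hh] at he'2; omega) h2.symm)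
          · exact absurd (Or.inl ⟨by omega, by omega, by omega⟩)
              (hcross e heF e' he'F (fun hh => by rw [hh] at he'2; omega))
      obtain ⟨j, hjF, hj1, hj2, hre2j1, hj2g⟩ :=
        cross_lemma (Set.Ioo e.2 e.1) hre2g1
          (show g.1 ∈ Set.Ioo e.2 e.1 by rw [Set.mem_Ioo]; omega)
          (show e.2 ∉ Set.Ioo e.2 e.1 by rw [Set.mem_Ioo]; omega)
      rw [Set.mem_Ioo] at hj2
      have hj1' : ¬(e.2 < j.1 ∧ j.1 < e.1) := fun h => hj1 (Set.mem_Ioo.mpr h)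
      have hj1e2 : j.1 = e.2 := by
        rcases lt_trichotomy j.1 e.2 with h | h | h
        · exact absurd (Or.inl ⟨by omega, by omega, by omega⟩)
            (hcross j hjF e heF (fun hh => by rw [hh] at hj2; omega))
        · exact h
        · rcases lt_trichotomy j.1 e.1 with h2 | h2 | h2
          · omega
          · exact absurd (Or.inr ⟨by omega, by omega⟩)
              (hdir e heF j hjF (fun hh => by rw [hh] at hj2; omega) h2.symm)
          · exact absurd (Or.inl ⟨by omega, by omega, by omega⟩)
              (hcross e heF j hjF (fun hh => by rw [hh] at hj2; omega))
      have hjedge : (e.2, j.2) ∈ F := by rw [← hj1e2]; exact hjF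
      have h0j2 : Reach F 0 j.2 := ((h0w.trans hwe1).tail heF).tail hjedge
      rcases eq_or_lt_of_le hef2 with hcorner | hpf
      · -- e.2 = f.1 : both f and j leave f.1 rightwards
        by_cases hjf : j = f
        · exact hg.2.2 f hfF (by rw [← hjf]; exact hj2g) hf.2.1
        · exact hdir f hfF j hjF (fun hh => hjf hh.symm) (by omega)
            (Or.inl ⟨by omega, by omega⟩)
      · obtain ⟨j', hj'F, hj'1, hj'2, hre2j'1, hj'2f⟩ :=
          cross_lemma (Set.Ioo e.2 e.1) he2f1
            (show f.1 ∈ Set.Ioo e.2 e.1 by rw [Set.mem_Ioo]; omega)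
            (show e.2 ∉ Set.Ioo e.2 e.1 by rw [Set.mem_Ioo]; omega)
        rw [Set.mem_Ioo] at hj'2
        have hj'1' : ¬(e.2 < j'.1 ∧ j'.1 < e.1) := fun h => hj'1 (Set.mem_Ioo.mpr h)
        have hj'1e2 : j'.1 = e.2 := by
          rcases lt_trichotomy j'.1 e.2 with h | h | h
          · exact absurd (Or.inl ⟨by omega, by omega, by omega⟩)
              (hcross j' hj'F e heF (fun hh => by rw [hh] at hj'2; omega))
          · exact h
          · rcases lt_trichotomy j'.1 e.1 with h2 | h2 | h2
            · omega
            · exact absurd (Or.inr ⟨by omega, by omega⟩)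
                (hdir e heF j' hj'F (fun hh => by rw [hh] at hj'2; omega) h2.symm)
            · exact absurd (Or.inl ⟨by omega, by omega, by omega⟩)
                (hcross e heF j' hj'F (fun hh => by rw [hh] at hj'2; omega))
        have hjj : j' = j := by
          by_contra hne'
          exact hdir j' hj'F j hjF hne' (hj'1e2.trans hj1e2.symm)
            (Or.inl ⟨by omega, by omega⟩)
        have hj2f : Reach F j.2 f.1 := hjj ▸ hj'2f
        have hj2C : j.2 ∉ Set.Icc a b := fun hmem => resp_avoid hf h0C h0j2 hj2f hmem
        have hj2C' : ¬(a ≤ j.2 ∧ j.2 ≤ b) := fun h => hj2C (Set.mem_Icc.mpr h)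
        have hnotf : ¬(f.1 < j.2 ∧ j.2 < f.2) := fun h =>
          hcross j hjF f hfF (fun hh => by rw [hh] at hj1e2; omega)
            (Or.inl ⟨by omega, by omega, by omega⟩)
        have hnotg : ¬(g.2 < j.2 ∧ j.2 < g.1) := fun h =>
          hcross j hjF g hgF (fun hh => by rw [hh] at hj1e2; omega)
            (Or.inl ⟨by omega, by omega, by omega⟩)
        have hside' : j.2 ≤ f.1 ∨ g.1 ≤ j.2 := by omega
        obtain ⟨u, hu⟩ := reach_exists hwe1
        obtain ⟨s, hs⟩ := reach_exists h0w
        obtain ⟨mp, hmp⟩ := reach_exists hj2f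
        obtain ⟨mp', hmp'⟩ := reach_exists hj2g
        have hwj : PathLen F (u + 1 + 1) w j.2 :=
          pathLen_comp (pathLen_comp hu (pathLen_single (show (e.1, e.2) ∈ F from heF)))
            (pathLen_single hjedge)
        have heq1 : s + kp = s + (u + 1 + 1) + mp :=
          dist_unique hne hz huniq (pathLen_comp hs hkp)
            (pathLen_comp (pathLen_comp hs hwj) hmp)
        have heq2 : s + kp' = s + (u + 1 + 1) + mp' :=
          dist_unique hne hz huniq (pathLen_comp hs hkp')
            (pathLen_comp (pathLen_comp hs hwj) hmp')
        exact IH (mp + mp') (by omega) j.2 mp mp' h0j2 hj2C hside' hmp hmp' le_rfl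
  obtain ⟨kp, hkp⟩ := reach_exists hreach0f1
  obtain ⟨kp', hkp'⟩ := reach_exists hreach0g1
  exact MIX (kp + kp') 0 kp kp' Relation.ReflTransGen.refl h0C (Or.inl (by omega))
    hkp hkp' le_rfl

omit hcross hdir in
/-- Existence of a responsible link, by strong induction on the depth of an entering link. -/
lemma exists_responsible {C : Set ℕ} :
    ∀ k, ∀ f : ℕ × ℕ, f ∈ F → Enters f C → PathLen F k 0 f.1 →
      ∃ h : ℕ × ℕ, Responsible F h C := by
  intro k
  induction k using Nat.strong_induction_on with
  | _ k IH =>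
  intro f hfF hent hk
  by_cases hresp : Responsible F f C
  · exact ⟨f, hresp⟩
  · have hex : ∃ g ∈ F, Reach F g.2 f.1 ∧ Enters g C := by
      by_contra h
      push_neg at h
      exact hresp ⟨hfF, hent, fun g hg hr => h g hg hr⟩
    obtain ⟨g, hgF, hrg, hentg⟩ := hex
    obtain ⟨m, hm⟩ := reach_exists (hreach g.1 (hne g hgF).2.1)
    obtain ⟨t, ht⟩ := reach_exists hrg
    have heq : m + 1 + t = k := dist_unique hne hz huniq
      (pathLen_comp (pathLen_comp hm (pathLen_single (show (g.1, g.2) ∈ F from hgF))) ht) hk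
    exact IH m (by omega) g hgF hentg hm

end Uniqueness

/-- For a feasible `R`-special directed solution `F`, every dangerous ring-cut has
exactly one directed link of `F` responsible for it. -/
theorem stmt5 (n : ℕ) (hn : 3 ≤ n) (R : Finset ℕ) (hR : R ⊆ Finset.range n) (hr : 0 ∈ R)
    (F : Finset (ℕ × ℕ)) (hsp : RSpecial R F) (hfeas : FeasibleDir n R F) :
    ∀ C : Set ℕ, IsRingCut n C → (C ∩ ↑R).Nonempty →
      ∃! f : ℕ × ℕ, Responsible F f C := by
  obtain ⟨hne, hz, huniq, hreach, hcross, hdir⟩ := hsp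
  intro C hcut hdang
  obtain ⟨f0, hf0F, hent0⟩ := hfeas C hcut hdang
  obtain ⟨a, b, ha1, hab, hbn, rfl⟩ := hcut
  obtain ⟨k, hk⟩ := reach_exists (hreach f0.1 (hne f0 hf0F).2.1)
  obtain ⟨f, hfresp⟩ := exists_responsible hne hz huniq hreach k f0 hf0F hent0 hk
  refine ⟨f, hfresp, ?_⟩
  intro y hy
  by_contra hne'
  exfalso
  have hyF := hy.1
  have hfF := hfresp.1
  have hy2 : a ≤ y.2 ∧ y.2 ≤ b := Set.mem_Icc.mp hy.2.1.1
  have hf2 : a ≤ f.2 ∧ f.2 ≤ b := Set.mem_Icc.mp hfresp.2.1.1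
  have hy1 : ¬(a ≤ y.1 ∧ y.1 ≤ b) := fun h => hy.2.1.2 (Set.mem_Icc.mpr h)
  have hf1 : ¬(a ≤ f.1 ∧ f.1 ≤ b) := fun h => hfresp.2.1.2 (Set.mem_Icc.mpr h)
  rcases lt_trichotomy y.1 f.1 with hlt | heq | hgt
  · rcases (by omega : y.1 < a ∨ b < y.1) with hyl | hyr
    · rcases (by omega : f.1 < a ∨ b < f.1) with hfl | hfr
      · exact left_left hne hz huniq hreach hcross hdir ha1 hy hfresp hyl hfl hlt
      · exact mixed hne hz huniq hreach hcross hdir ha1 hy hfresp hyl hfr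
    · exact right_right hne hz huniq hreach hcross hdir ha1 hfresp hy (by omega) hyr hlt
  · rcases (by omega : y.1 < a ∨ b < y.1) with hyl | hyr
    · exact hdir y hyF f hfF hne' heq (Or.inl ⟨by omega, by omega⟩)
    · exact hdir y hyF f hfF hne' heq (Or.inr ⟨by omega, by omega⟩)
  · rcases (by omega : f.1 < a ∨ b < f.1) with hfl | hfr
    · rcases (by omega : y.1 < a ∨ b < y.1) with hyl | hyr
      · exact left_left hne hz huniq hreach hcross hdir ha1 hfresp hy hfl hyl hgt
      · exact mixed hne hz huniq hreach hcross hdir ha1 hfresp hy hfl hyr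
    · exact right_right hne hz huniq hreach hcross hdir ha1 hy hfresp (by omega) hfr hgt
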